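/- Let μ0 be a full-support probability on ℕ*, let (μ_Δ)_{Δ∈ℕ} be the Cond-int family, and define T_μ(s,t;u) = μ_{|t−s|}(u − max(s,t)) if u > max(s,t) and 0 otherwise, for s,t,u ∈ ℤ. Let α > 0 be such that ∑_{v≥1} √(μ0(v))·α^v < ∞ and ∑_{v≥1} √(μ0(v))·α^{−v} < ∞, and define M⁻_α(s;u) = √(μ0(u−s))·α^{u−s} / ∑_{v≥1} √(μ0(v))·α^v if u > s (and 0 otherwise) and M⁺_α(u;t) = √(μ0(u−t))·α^{−(u−t)} / ∑_{v≥1} √(μ0(v))·α^{−v} if u > t (and 0 otherwise). Then for all s, t, u ∈ ℤ: (∑_{w∈ℤ} M⁻_α(s;w)·M⁺_α(w;t)) · T_μ(s,t;u) = M⁻_α(s;u) · M⁺_α(u;t). -/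

import Mathlib

open scoped BigOperators

/-- The Cond-int family associated to a full-support probability `μ0` on `ℕ*`. -/
noncomputable def condInt (μ0 : ℕ → ℝ) (Δ t : ℕ) : ℝ :=
  Real.sqrt (μ0 t * μ0 (t + Δ)) / ∑' s : ℕ, Real.sqrt (μ0 (s + 1) * μ0 (s + 1 + Δ))

/-- The PCA transition `T_μ(s,t;u) = μ_{|t−s|}(u − max(s,t))` for `u > max(s,t)`, else `0`. -/
noncomputable def Tmu (μ0 : ℕ → ℝ) (s t u : ℤ) : ℝ :=
  if max s t < u then condInt μ0 (t - s).natAbs (u - max s t).toNat else 0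

/-- The tilted kernel `M⁻_α(s;u) = √(μ0(u−s))·α^{u−s} / ∑_{v≥1} √(μ0(v))·α^v`
for `u > s`, else `0`. -/
noncomputable def MminusA (μ0 : ℕ → ℝ) (α : ℝ) (s u : ℤ) : ℝ :=
  if s < u then
    Real.sqrt (μ0 (u - s).toNat) * α ^ (u - s).toNat
      / ∑' v : ℕ, Real.sqrt (μ0 (v + 1)) * α ^ (v + 1)
  else 0

/-- The tilted kernel `M⁺_α(u;t) = √(μ0(u−t))·α^{−(u−t)} / ∑_{v≥1} √(μ0(v))·α^{−v}`
for `u > t`, else `0`. -/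
noncomputable def MplusA (μ0 : ℕ → ℝ) (α : ℝ) (u t : ℤ) : ℝ :=
  if t < u then
    Real.sqrt (μ0 (u - t).toNat) * α⁻¹ ^ (u - t).toNat
      / ∑' v : ℕ, Real.sqrt (μ0 (v + 1)) * α⁻¹ ^ (v + 1)
  else 0

lemma tsum_int_shift (f : ℤ → ℝ) (m : ℤ) (hf : ∀ w : ℤ, w ≤ m → f w = 0) :
    ∑' w : ℤ, f w = ∑' k : ℕ, f (m + 1 + k) := by
  refine tsum_eq_tsum_of_ne_zero_bij (fun k => m + 1 + (k : ℤ)) ?_ ?_ ?_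
  · intro a b hab
    have : ((a : ℕ) : ℤ) = ((b : ℕ) : ℤ) := by simpa using hab
    exact Subtype.ext (by exact_mod_cast this)
  · intro w hw
    have hmw : m < w := by
      by_contra h
      exact hw (hf w (not_lt.mp h))
    have hk : f (m + 1 + ((w - m - 1).toNat : ℤ)) ≠ 0 := by
      have : m + 1 + ((w - m - 1).toNat : ℤ) = w := by omega
      rwa [this]
    exact ⟨⟨(w - m - 1).toNat, hk⟩, by simp; omega⟩
  · intro x; rfl

lemma main_case (μ0 : ℕ → ℝ) (Δ : ℕ) (S : ℝ) (hS : S ≠ 0)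
    (hSdef : S = ∑' k : ℕ, Real.sqrt (μ0 (k + 1) * μ0 (k + 1 + Δ)))
    (f : ℤ → ℝ) (m u : ℤ) (c : ℝ)
    (hf0 : ∀ w : ℤ, w ≤ m → f w = 0)
    (hfk : ∀ k : ℕ, f (m + 1 + k) = c * Real.sqrt (μ0 (k + 1) * μ0 (k + 1 + Δ))) :
    (∑' w : ℤ, f w) * condInt μ0 Δ (u - m).toNat
      = c * Real.sqrt (μ0 ((u - m).toNat) * μ0 ((u - m).toNat + Δ)) := by
  rw [tsum_int_shift f m hf0]
  simp_rw [hfk]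
  rw [tsum_mul_left, condInt, ← hSdef]
  field_simp

/-- The integrability relation `(M⁻_α M⁺_α)(s;t) · T_μ(s,t;u) = M⁻_α(s;u) · M⁺_α(u;t)`
for the `α`-tilted kernels. -/
theorem stmt_4 (μ0 : ℕ → ℝ) (h0 : μ0 0 = 0) (hpos : ∀ i, 1 ≤ i → 0 < μ0 i)
    (hsum : HasSum (fun i : ℕ => μ0 (i + 1)) 1)
    (α : ℝ) (hα : 0 < α)
    (h1 : Summable (fun v : ℕ => Real.sqrt (μ0 (v + 1)) * α ^ (v + 1)))
    (h2 : Summable (fun v : ℕ => Real.sqrt (μ0 (v + 1)) * α⁻¹ ^ (v + 1)))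
    (s t u : ℤ) :
    (∑' w : ℤ, MminusA μ0 α s w * MplusA μ0 α w t) * Tmu μ0 s t u
      = MminusA μ0 α s u * MplusA μ0 α u t := by
  by_cases hu : max s t < u
  swap
  · rw [Tmu, if_neg hu, mul_zero]
    push_neg at hu
    rcases le_max_iff.mp hu with h | h
    · rw [MminusA, if_neg (not_lt.mpr h), zero_mul]
    · rw [MplusA, if_neg (not_lt.mpr h), mul_zero]
  have hnn : ∀ i, 0 ≤ μ0 i := fun i => by
    rcases Nat.eq_zero_or_pos i with h | h
    · simp [h, h0]
    · exact (hpos i h).le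
  have hα' : α ≠ 0 := hα.ne'
  set Δ := (t - s).natAbs with hΔ
  -- positivity of the condInt denominator
  have hshift : Summable (fun k : ℕ => μ0 (k + 1 + Δ)) := by
    have h := hsum.summable.comp_injective (add_left_injective Δ)
    refine h.congr fun k => ?_
    show μ0 (k + Δ + 1) = μ0 (k + 1 + Δ)
    rw [add_right_comm]
  have hSsum : Summable (fun k : ℕ => Real.sqrt (μ0 (k + 1) * μ0 (k + 1 + Δ))) := by
    refine Summable.of_nonneg_of_le (fun k => Real.sqrt_nonneg _) (fun k => ?_)
      ((hsum.summable.add hshift).div_const 2)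
    rw [Real.sqrt_mul (hnn _)]
    nlinarith [Real.sq_sqrt (hnn (k + 1)), Real.sq_sqrt (hnn (k + 1 + Δ)),
      sq_nonneg (Real.sqrt (μ0 (k + 1)) - Real.sqrt (μ0 (k + 1 + Δ)))]
  have hSpos : 0 < ∑' k : ℕ, Real.sqrt (μ0 (k + 1) * μ0 (k + 1 + Δ)) :=
    Summable.tsum_pos hSsum (fun k => Real.sqrt_nonneg _) 0
      (Real.sqrt_pos.mpr (mul_pos (hpos 1 le_rfl) (hpos (1 + Δ) (by omega))))
  rcases le_total s t with hst | hts
  · -- s ≤ t, max = t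
    have hmax : max s t = t := max_eq_right hst
    rw [Tmu, if_pos hu, hmax, ← hΔ]
    have htu : t < u := by rw [hmax] at hu; exact hu
    set Zp := ∑' v : ℕ, Real.sqrt (μ0 (v + 1)) * α ^ (v + 1) with hZp
    set Zm := ∑' v : ℕ, Real.sqrt (μ0 (v + 1)) * α⁻¹ ^ (v + 1) with hZm
    have hpow : ∀ a : ℕ, α ^ (a + Δ) * α⁻¹ ^ a = α ^ Δ := by
      intro a
      rw [pow_add, inv_pow]
      field_simp
    have hrhs : ∀ n : ℕ, 1 ≤ n → ∀ w : ℤ, t < w → (w - t).toNat = n →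
        MminusA μ0 α s w * MplusA μ0 α w t
          = (α ^ Δ / (Zp * Zm)) * Real.sqrt (μ0 n * μ0 (n + Δ)) := by
      intro n hn w hw hwn
      have hsw : s < w := lt_of_le_of_lt hst hw
      rw [MminusA, MplusA, if_pos hsw, if_pos hw, ← hZp, ← hZm, hwn]
      have e1 : (w - s).toNat = n + Δ := by omega
      rw [e1, Real.sqrt_mul (hnn n), div_mul_div_comm, div_mul_eq_mul_div]
      congr 1
      linear_combination Real.sqrt (μ0 (n + Δ)) * Real.sqrt (μ0 n) * hpow n
    rw [hrhs ((u - t).toNat) (by omega) u htu rfl]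
    exact main_case μ0 Δ _ hSpos.ne' rfl _ t u _
      (fun w hw => by rw [MplusA, if_neg (not_lt.mpr hw), mul_zero])
      (fun k => hrhs (k + 1) (by omega) (t + 1 + k) (by omega) (by omega))
  · -- t ≤ s, max = s
    have hmax : max s t = s := max_eq_left hts
    rw [Tmu, if_pos hu, hmax, ← hΔ]
    have hsu : s < u := by rw [hmax] at hu; exact hu
    set Zp := ∑' v : ℕ, Real.sqrt (μ0 (v + 1)) * α ^ (v + 1) with hZp
    set Zm := ∑' v : ℕ, Real.sqrt (μ0 (v + 1)) * α⁻¹ ^ (v + 1) with hZm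
    have hpow : ∀ a : ℕ, α ^ a * α⁻¹ ^ (a + Δ) = α⁻¹ ^ Δ := by
      intro a
      rw [pow_add, inv_pow, inv_pow, ← mul_assoc,
        mul_inv_cancel₀ (pow_ne_zero a hα'), one_mul]
    have hrhs : ∀ n : ℕ, 1 ≤ n → ∀ w : ℤ, s < w → (w - s).toNat = n →
        MminusA μ0 α s w * MplusA μ0 α w t
          = (α⁻¹ ^ Δ / (Zp * Zm)) * Real.sqrt (μ0 n * μ0 (n + Δ)) := by
      intro n hn w hw hwn
      have htw : t < w := lt_of_le_of_lt hts hw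
      rw [MminusA, MplusA, if_pos hw, if_pos htw, ← hZp, ← hZm, hwn]
      have e1 : (w - t).toNat = n + Δ := by omega
      rw [e1, Real.sqrt_mul (hnn n), div_mul_div_comm, div_mul_eq_mul_div]
      congr 1
      linear_combination Real.sqrt (μ0 n) * Real.sqrt (μ0 (n + Δ)) * hpow n
    rw [hrhs ((u - s).toNat) (by omega) u hsu rfl]
    exact main_case μ0 Δ _ hSpos.ne' rfl _ s u _
      (fun w hw => by rw [MminusA, if_neg (not_lt.mpr hw), zero_mul])
      (fun k => hrhs (k + 1) (by omega) (s + 1 + k) (by omega) (by omega))
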